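/- For any arrival sequence b ∈ {0,1}^ℓ, the color-blind equivalence class of b has exactly 2^{t(b)} elements, where t(b) is the number of steps at which the merging path of b starts while resting on the diagonal (R = L before the step). In particular, the class size is always even for ℓ ≥ 1. -/

import Mathlib

/-- Process an arrival sequence with right-lane count `R` and left-lane count `L`:
`false` (a red car) or a shorter-or-equal right lane sends the car right. -/
def procAux : ℕ → ℕ → List Bool → ℕ × ℕ
  | R, L, [] => (R, L)
  | R, L, bi :: rest =>
    if bi = false ∨ R ≤ L then procAux (R + 1) L rest else procAux R (L + 1) rest

/-- Final (right lane length, left lane length) of an arrival sequence. -/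
def proc (b : List Bool) : ℕ × ℕ := procAux 0 0 b

/-- The final length of the right lane. -/
def rlen (b : List Bool) : ℕ := (proc b).1

/-- Number of bounces: steps where `bᵢ = 1` and the lanes are equal. -/
def bncAux : ℕ → ℕ → List Bool → ℕ
  | _, _, [] => 0
  | R, L, bi :: rest =>
    if bi = true ∧ R = L then 1 + bncAux (R + 1) L rest
    else if bi = false ∨ R ≤ L then bncAux (R + 1) L rest
    else bncAux R (L + 1) rest

def bnc (b : List Bool) : ℕ := bncAux 0 0 b

/-- The parity vector: starts at `0` and toggles just after each bounce. -/
def pvAux : ℕ → ℕ → Bool → List Bool → List Bool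
  | _, _, _, [] => []
  | R, L, p, bi :: rest =>
    let p' := if bi = true ∧ R = L then !p else p
    if bi = false ∨ R ≤ L then p :: pvAux (R + 1) L p' rest
    else p :: pvAux R (L + 1) p' rest

def parityVec (b : List Bool) : List Bool := pvAux 0 0 false b

/-- `φ(b) = b + p(b)` bitwise mod 2. -/
def phi (b : List Bool) : List Bool := List.zipWith xor b (parityVec b)

/-- The right lane vector: indices (1-based) of cars that end in the right lane, in order. -/
def rvecAux : ℕ → ℕ → ℕ → List Bool → List ℕ
  | _, _, _, [] => []
  | R, L, i, bi :: rest =>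
    if bi = false ∨ R ≤ L then i :: rvecAux (R + 1) L (i + 1) rest
    else rvecAux R (L + 1) (i + 1) rest

def rvec (b : List Bool) : List ℕ := rvecAux 0 0 1 b

/-- The number of steps that start with the merging path resting on the diagonal (`R = L`). -/
def touchesAux : ℕ → ℕ → List Bool → ℕ
  | _, _, [] => 0
  | R, L, bi :: rest =>
    (if R = L then 1 else 0) +
      (if bi = false ∨ R ≤ L then touchesAux (R + 1) L rest else touchesAux R (L + 1) rest)

def touches (b : List Bool) : ℕ := touchesAux 0 0 b

lemma rvecAux_cons (R L i : ℕ) (x : Bool) (l : List Bool) :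
    rvecAux R L i (x :: l) = if x = false ∨ R ≤ L then i :: rvecAux (R + 1) L (i + 1) l
      else rvecAux R (L + 1) (i + 1) l := rfl

lemma touchesAux_cons (R L : ℕ) (x : Bool) (l : List Bool) :
    touchesAux R L (x :: l) = (if R = L then 1 else 0) +
      (if x = false ∨ R ≤ L then touchesAux (R + 1) L l else touchesAux R (L + 1) l) := rfl

lemma rvec_ge : ∀ (l : List Bool) (R L i : ℕ), ∀ x ∈ rvecAux R L i l, i ≤ x := by
  intro l
  induction l with
  | nil => intro R L i x hx; simp [rvecAux] at hx
  | cons hd tl ih =>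
    intro R L i x hx
    rw [rvecAux_cons] at hx
    split at hx
    · rcases List.mem_cons.1 hx with h | h
      · omega
      · have := ih (R+1) L (i+1) x h; omega
    · have := ih R (L+1) (i+1) x hx; omega

lemma card_cons (n : ℕ) (Q : Bool → (Fin n → Bool) → Prop) [∀ x a, Decidable (Q x a)] :
    (Finset.univ.filter fun a : Fin (n+1) → Bool => Q (a 0) (fun i => a i.succ)).card
      = (Finset.univ.filter fun a : Fin n → Bool => Q false a).card
        + (Finset.univ.filter fun a : Fin n → Bool => Q true a).card := by
  rw [Finset.card_filter, Finset.card_filter, Finset.card_filter]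
  rw [← Equiv.sum_comp (Fin.consEquiv fun _ : Fin (n+1) => Bool)]
  rw [Fintype.sum_prod_type]
  rw [Fintype.sum_bool]
  simp [Fin.consEquiv, Fin.cons_zero, Fin.cons_succ]
  ring

lemma ne_of_head (R L i : ℕ) (l : List Bool) (B : List ℕ) :
    rvecAux R (L+1) (i+1) l ≠ i :: B := by
  intro h
  have : i ∈ rvecAux R (L+1) (i+1) l := by rw [h]; exact List.mem_cons_self
  have := rvec_ge l R (L+1) (i+1) i this
  omega

lemma key : ∀ (n : ℕ) (R L i : ℕ), L ≤ R → ∀ b : Fin n → Bool,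
    (Finset.univ.filter fun a : Fin n → Bool =>
      rvecAux R L i (List.ofFn a) = rvecAux R L i (List.ofFn b)).card
      = 2 ^ touchesAux R L (List.ofFn b) := by
  intro n
  induction n with
  | zero =>
    intro R L i _ b
    simp [List.ofFn_zero, touchesAux]
  | succ n ih =>
    intro R L i hLR b
    have hb : List.ofFn b = b 0 :: List.ofFn (fun j => b j.succ) := List.ofFn_succ (f := b)
    have hrw : (Finset.univ.filter fun a : Fin (n+1) → Bool =>
        rvecAux R L i (List.ofFn a) = rvecAux R L i (List.ofFn b)).card
        = (Finset.univ.filter fun a : Fin (n+1) → Bool =>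
          rvecAux R L i ((a 0) :: List.ofFn fun j => a j.succ)
            = rvecAux R L i (List.ofFn b)).card := by
      congr 1
      apply Finset.filter_congr
      intro a _
      rw [List.ofFn_succ (f := a)]
    have hcard := card_cons n (fun x a' =>
        rvecAux R L i (x :: List.ofFn a') = rvecAux R L i (List.ofFn b))
    rw [hrw, hcard]
    by_cases hRL : R ≤ L
    · -- touch step: both values of the first bit go right
      have hEq : R = L := le_antisymm hRL hLR
      have hsame : ∀ x : Bool, (Finset.univ.filter fun a' : Fin n → Bool =>
          rvecAux R L i (x :: List.ofFn a') = rvecAux R L i (List.ofFn b)).card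
          = 2 ^ touchesAux (R+1) L (List.ofFn (fun j => b j.succ)) := by
        intro x
        refine Eq.trans ?_ (ih (R+1) L (i+1) (Nat.le_succ_of_le hLR) (fun j => b j.succ))
        congr 1
        apply Finset.filter_congr
        intro a' _
        rw [hb, rvecAux_cons, rvecAux_cons, if_pos (Or.inr hRL), if_pos (Or.inr hRL)]
        simp
      rw [hsame false, hsame true, hb, touchesAux_cons, if_pos hEq, if_pos (Or.inr hRL)]
      ring
    · -- non-touch step: first bit is forced
      cases hb0 : b 0 with
      | false =>
        have htouch : touchesAux R L (List.ofFn b) = touchesAux (R+1) L (List.ofFn (fun j => b j.succ)) := by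
          rw [hb, hb0, touchesAux_cons, if_neg (fun h => hRL (le_of_eq h)), if_pos (Or.inl rfl), Nat.zero_add]
        have hfalse : (Finset.univ.filter fun a' : Fin n → Bool =>
            rvecAux R L i (false :: List.ofFn a') = rvecAux R L i (List.ofFn b)).card
            = 2 ^ touchesAux (R+1) L (List.ofFn (fun j => b j.succ)) := by
          refine Eq.trans ?_ (ih (R+1) L (i+1) (Nat.le_succ_of_le hLR) (fun j => b j.succ))
          congr 1
          apply Finset.filter_congr
          intro a' _
          rw [hb, hb0, rvecAux_cons, rvecAux_cons, if_pos (Or.inl rfl), if_pos (Or.inl rfl)]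
          simp
        have htrue : (Finset.univ.filter fun a' : Fin n → Bool =>
            rvecAux R L i (true :: List.ofFn a') = rvecAux R L i (List.ofFn b)).card = 0 := by
          rw [Finset.card_eq_zero, Finset.filter_eq_empty_iff]
          intro a' _
          rw [hb, hb0, rvecAux_cons, rvecAux_cons,
            if_neg (by simp [hRL]), if_pos (Or.inl rfl)]
          exact ne_of_head R L i (List.ofFn a') _
        rw [hfalse, htrue, htouch, Nat.add_zero]
      | true =>
        have htouch : touchesAux R L (List.ofFn b) = touchesAux R (L+1) (List.ofFn (fun j => b j.succ)) := by
          rw [hb, hb0, touchesAux_cons, if_neg (fun h => hRL (le_of_eq h)), if_neg (by simp [hRL]), Nat.zero_add]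
        have hfalse : (Finset.univ.filter fun a' : Fin n → Bool =>
            rvecAux R L i (false :: List.ofFn a') = rvecAux R L i (List.ofFn b)).card = 0 := by
          rw [Finset.card_eq_zero, Finset.filter_eq_empty_iff]
          intro a' _
          rw [hb, hb0, rvecAux_cons, rvecAux_cons,
            if_pos (Or.inl rfl), if_neg (by simp [hRL])]
          intro h
          exact ne_of_head R L i (List.ofFn (fun j => b j.succ)) _ h.symm
        have htrue : (Finset.univ.filter fun a' : Fin n → Bool =>
            rvecAux R L i (true :: List.ofFn a') = rvecAux R L i (List.ofFn b)).card
            = 2 ^ touchesAux R (L+1) (List.ofFn (fun j => b j.succ)) := by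
          refine Eq.trans ?_ (ih R (L+1) (i+1) (Nat.lt_of_not_le hRL) (fun j => b j.succ))
          congr 1
          apply Finset.filter_congr
          intro a' _
          rw [hb, hb0, rvecAux_cons, rvecAux_cons,
            if_neg (by simp [hRL]), if_neg (by simp [hRL])]
        rw [hfalse, htrue, htouch, Nat.zero_add]


theorem stmt_19 (ℓ : ℕ) (b : Fin ℓ → Bool) :
    (Finset.univ.filter (fun a : Fin ℓ → Bool =>
        rvec (List.ofFn a) = rvec (List.ofFn b))).card = 2 ^ touches (List.ofFn b) ∧
      (1 ≤ ℓ →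
        Even (Finset.univ.filter (fun a : Fin ℓ → Bool =>
          rvec (List.ofFn a) = rvec (List.ofFn b))).card) := by
  have h1 : (Finset.univ.filter (fun a : Fin ℓ → Bool =>
      rvec (List.ofFn a) = rvec (List.ofFn b))).card = 2 ^ touches (List.ofFn b) := by
    have := key ℓ 0 0 1 le_rfl b
    exact this
  refine ⟨h1, fun hℓ => ?_⟩
  rw [h1]
  obtain ⟨x, l, hl⟩ : ∃ x l, List.ofFn b = x :: l := by
    cases hc : List.ofFn b with
    | nil => exfalso; have := List.length_ofFn (f := b); rw [hc] at this; simp at this; omega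
    | cons x l => exact ⟨x, l, rfl⟩
  rw [hl]
  have : touches (x :: l) = 1 + (if x = false ∨ 0 ≤ 0 then touchesAux (0+1) 0 l
      else touchesAux 0 (0+1) l) := by
    simp [touches, touchesAux_cons]
  rw [this, pow_add, pow_one]
  exact ⟨2 ^ (if x = false ∨ 0 ≤ 0 then touchesAux (0+1) 0 l else touchesAux 0 (0+1) l),
    by ring⟩
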